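/- Let S(t) be the axisymmetric vorticity semigroup defined via the kernel (1/(4πt)) (r̄/r)^{1/2} H(t/(r r̄)) exp(−((r−r̄)² + (z−z̄)²)/(4t)) on Ω = {(r,z) : r > 0}. Then for all 1 ≤ p ≤ q ≤ ∞, all t > 0 and all g ∈ L^p(Ω; dr dz): ‖S(t)(g/r)‖_{L^q(Ω)} ≤ C t^{−(1/2 + 1/p − 1/q)} ‖g‖_{L^p(Ω)}. -/

import Mathlib

open Real MeasureTheory ENNReal

/-- The half-plane `Ω = {(r,z) : r > 0}`. -/
def sgOmega : Set (ℝ × ℝ) := {x : ℝ × ℝ | 0 < x.1}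

/-- The 2D measure `dr dz` on the half-plane. -/
noncomputable def sgMu : Measure (ℝ × ℝ) := (volume : Measure (ℝ × ℝ)).restrict sgOmega

/-- `H(t) = (1/√(πt)) ∫_{-π/2}^{π/2} e^{-sin²φ/t} cos(2φ) dφ`. -/
noncomputable def sgH (t : ℝ) : ℝ :=
  (1 / Real.sqrt (π * t)) *
    ∫ φ in (-(π/2))..(π/2), Real.exp (-(Real.sin φ)^2 / t) * Real.cos (2*φ)

/-- The axisymmetric vorticity semigroup
`(S(t)g)(r,z) = (1/(4πt)) ∫_Ω (r̄/r)^{1/2} H(t/(r r̄)) e^{-((r-r̄)²+(z-z̄)²)/(4t)} g(r̄,z̄) dr̄ dz̄`. -/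
noncomputable def sgS (t : ℝ) (g : ℝ × ℝ → ℝ) (x : ℝ × ℝ) : ℝ :=
  (1 / (4*π*t)) *
    ∫ w in sgOmega, Real.sqrt (w.1 / x.1) * sgH (t / (x.1 * w.1)) *
      Real.exp (-(((x.1 - w.1)^2 + (x.2 - w.2)^2) / (4*t))) * g w

/-! ### Auxiliary lemmas -/

lemma sgH_abs_le {s : ℝ} (hs : 0 < s) : |sgH s| ≤ Real.sqrt π / Real.sqrt s := by
  have hI : ‖∫ φ in (-(π/2))..(π/2), Real.exp (-(Real.sin φ)^2 / s) * Real.cos (2*φ)‖ ≤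
      1 * |π/2 - (-(π/2))| := by
    apply intervalIntegral.norm_integral_le_of_norm_le_const
    intro x _
    rw [Real.norm_eq_abs, abs_mul]
    have h1 : |Real.exp (-(Real.sin x)^2 / s)| ≤ 1 := by
      rw [abs_of_pos (Real.exp_pos _)]
      apply Real.exp_le_one_iff.2
      apply div_nonpos_of_nonpos_of_nonneg (neg_nonpos.2 (sq_nonneg _)) hs.le
    nlinarith [abs_cos_le_one (2*x), abs_nonneg (Real.cos (2*x)),
      abs_nonneg (Real.exp (-(Real.sin x)^2 / s))]
  have hπ : |π/2 - (-(π/2))| = π := by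
    rw [sub_neg_eq_add, abs_of_pos (by positivity)]; ring
  rw [hπ] at hI
  have hsq : Real.sqrt (π * s) = Real.sqrt π * Real.sqrt s := Real.sqrt_mul pi_pos.le _
  have h0 : (0:ℝ) < Real.sqrt π * Real.sqrt s := by positivity
  calc |sgH s| = (1 / (Real.sqrt π * Real.sqrt s)) * ‖∫ φ in (-(π/2))..(π/2),
        Real.exp (-(Real.sin φ)^2 / s) * Real.cos (2*φ)‖ := by
        rw [sgH, abs_mul, hsq, Real.norm_eq_abs]
        congr 1
        rw [abs_of_pos (by positivity)]
    _ ≤ (1 / (Real.sqrt π * Real.sqrt s)) * (1 * π) := by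
        apply mul_le_mul_of_nonneg_left hI (by positivity)
    _ = Real.sqrt π / Real.sqrt s := by
        have hπs : Real.sqrt π * Real.sqrt π = π := Real.mul_self_sqrt pi_pos.le
        have hsp : (0:ℝ) < Real.sqrt s := Real.sqrt_pos.2 hs
        have hpp : (0:ℝ) < Real.sqrt π := Real.sqrt_pos.2 pi_pos
        field_simp
        nlinarith [hπs, sq_nonneg (Real.sqrt π)]

lemma sgOmega_meas : MeasurableSet sgOmega :=
  measurableSet_Ioi.preimage measurable_fst

lemma sg_gauss1 {t : ℝ} (ht : 0 < t) (c : ℝ) :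
    ∫⁻ x : ℝ, ENNReal.ofReal (Real.exp (-((c - x)^2 / (4*t))))
      = ENNReal.ofReal (2 * Real.sqrt (π * t)) := by
  have hb : (0:ℝ) < 1/(4*t) := by positivity
  have hint : Integrable (fun x : ℝ => Real.exp (-(1/(4*t)) * x^2)) := integrable_exp_neg_mul_sq hb
  have hkey : (fun x : ℝ => Real.exp (-((c - x)^2 / (4*t)))) =
      (fun x : ℝ => (fun y : ℝ => Real.exp (-(1/(4*t)) * y^2)) (x - c)) := by
    funext x; simp only []; ring_nf
  have hint2 : Integrable (fun x : ℝ => Real.exp (-((c - x)^2 / (4*t)))) := by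
    rw [hkey]; exact hint.comp_sub_right c
  rw [← ofReal_integral_eq_lintegral_ofReal hint2
    (Filter.Eventually.of_forall fun x => (Real.exp_pos _).le)]
  congr 1
  rw [hkey, integral_sub_right_eq_self (fun y : ℝ => Real.exp (-(1/(4*t)) * y^2)) c,
    integral_gaussian]
  rw [show π / (1/(4*t)) = 4 * (π * t) by field_simp]
  rw [show (4 : ℝ) * (π * t) = 2^2 * (π*t) by ring, Real.sqrt_mul (by positivity),
    Real.sqrt_sq (by norm_num)]

lemma sg_gauss2 {t : ℝ} (ht : 0 < t) (c : ℝ × ℝ) :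
    ∫⁻ y, ENNReal.ofReal (Real.exp (-(((c.1 - y.1)^2 + (c.2 - y.2)^2) / (4*t)))) ∂sgMu
      ≤ ENNReal.ofReal (4*π*t) := by
  have h1 : ∫⁻ y, ENNReal.ofReal (Real.exp (-(((c.1 - y.1)^2 + (c.2 - y.2)^2) / (4*t)))) ∂sgMu
      ≤ ∫⁻ y : ℝ × ℝ, ENNReal.ofReal (Real.exp (-(((c.1 - y.1)^2 + (c.2 - y.2)^2) / (4*t)))) :=
    lintegral_mono' Measure.restrict_le_self le_rfl
  refine h1.trans ?_
  have hsplit : ∀ y : ℝ × ℝ, ENNReal.ofReal (Real.exp (-(((c.1 - y.1)^2 + (c.2 - y.2)^2) / (4*t))))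
      = ENNReal.ofReal (Real.exp (-((c.1 - y.1)^2 / (4*t)))) *
        ENNReal.ofReal (Real.exp (-((c.2 - y.2)^2 / (4*t)))) := by
    intro y
    rw [← ENNReal.ofReal_mul (Real.exp_pos _).le, ← Real.exp_add]
    congr 2
    ring
  simp_rw [hsplit]
  rw [Measure.volume_eq_prod]
  refine le_trans (le_of_eq (lintegral_prod_mul
    (f := fun a : ℝ => ENNReal.ofReal (Real.exp (-((c.1 - a)^2 / (4*t)))))
    (g := fun b : ℝ => ENNReal.ofReal (Real.exp (-((c.2 - b)^2 / (4*t)))))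
    (by exact (ENNReal.measurable_ofReal.comp (by fun_prop)).aemeasurable)
    (by exact (ENNReal.measurable_ofReal.comp (by fun_prop)).aemeasurable))) ?_
  rw [sg_gauss1 ht c.1, sg_gauss1 ht c.2, ← ENNReal.ofReal_mul (by positivity)]
  apply ENNReal.ofReal_le_ofReal
  have : Real.sqrt (π*t) * Real.sqrt (π*t) = π * t := Real.mul_self_sqrt (by positivity)
  nlinarith

lemma sg_sqrt_identity {t x1 w1 : ℝ} (ht : 0 < t) (hx : 0 < x1) (hw : 0 < w1) :
    Real.sqrt (w1/x1) * (Real.sqrt π / Real.sqrt (t/(x1*w1))) / w1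
      = Real.sqrt π / Real.sqrt t := by
  rw [Real.sqrt_div hw.le, Real.sqrt_div ht.le, Real.sqrt_mul hx.le]
  have h1 : (0:ℝ) < Real.sqrt x1 := Real.sqrt_pos.2 hx
  have h2 : (0:ℝ) < Real.sqrt w1 := Real.sqrt_pos.2 hw
  have h3 : (0:ℝ) < Real.sqrt t := Real.sqrt_pos.2 ht
  have h4 : Real.sqrt w1 * Real.sqrt w1 = w1 := Real.mul_self_sqrt hw.le
  field_simp
  linear_combination h4

lemma sgS_pointwise {t : ℝ} (ht : 0 < t) (g' : ℝ × ℝ → ℝ) {x : ℝ × ℝ} (hx : 0 < x.1) :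
    (‖sgS t (fun w => g' w / w.1) x‖₊ : ℝ≥0∞) ≤
      ENNReal.ofReal (Real.sqrt π / (4*π*t*Real.sqrt t)) *
        ∫⁻ w, ENNReal.ofReal (Real.exp (-(((x.1 - w.1)^2 + (x.2 - w.2)^2) / (4*t)))) *
          (‖g' w‖₊ : ℝ≥0∞) ∂sgMu := by
  have h4πt : (0:ℝ) < 4*π*t := by positivity
  rw [sgS]
  calc (‖(1 / (4*π*t)) * ∫ w in sgOmega, Real.sqrt (w.1 / x.1) * sgH (t / (x.1 * w.1)) *
        Real.exp (-(((x.1 - w.1)^2 + (x.2 - w.2)^2) / (4*t))) * (g' w / w.1)‖₊ : ℝ≥0∞)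
      = ENNReal.ofReal (1/(4*π*t)) * (‖∫ w in sgOmega, Real.sqrt (w.1 / x.1) *
          sgH (t / (x.1 * w.1)) *
        Real.exp (-(((x.1 - w.1)^2 + (x.2 - w.2)^2) / (4*t))) * (g' w / w.1)‖₊ : ℝ≥0∞) := by
        rw [nnnorm_mul, ENNReal.coe_mul, ← enorm_eq_nnnorm (1/(4*π*t)), Real.enorm_eq_ofReal_abs (1/(4*π*t)),
          abs_of_pos (by positivity)]
    _ ≤ ENNReal.ofReal (1/(4*π*t)) * ∫⁻ w, (‖Real.sqrt (w.1 / x.1) * sgH (t / (x.1 * w.1)) *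
        Real.exp (-(((x.1 - w.1)^2 + (x.2 - w.2)^2) / (4*t))) * (g' w / w.1)‖₊ : ℝ≥0∞) ∂sgMu := by
        gcongr
        exact enorm_integral_le_lintegral_enorm _
    _ ≤ ENNReal.ofReal (1/(4*π*t)) * ∫⁻ w, ENNReal.ofReal (Real.sqrt π / Real.sqrt t) *
        (ENNReal.ofReal (Real.exp (-(((x.1 - w.1)^2 + (x.2 - w.2)^2) / (4*t)))) *
          (‖g' w‖₊ : ℝ≥0∞)) ∂sgMu := by
        refine mul_le_mul_right ?_ _
        apply lintegral_mono_ae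
        filter_upwards [ae_restrict_mem sgOmega_meas] with w hw
        have hw1 : 0 < w.1 := hw
        have hs : 0 < t / (x.1 * w.1) := by positivity
        set E := Real.exp (-(((x.1 - w.1)^2 + (x.2 - w.2)^2) / (4*t))) with hE
        have hE0 : 0 < E := Real.exp_pos _
        rw [← enorm_eq_nnnorm, Real.enorm_eq_ofReal_abs, ← enorm_eq_nnnorm, Real.enorm_eq_ofReal_abs,
          ← ENNReal.ofReal_mul (Real.exp_pos _).le, ← ENNReal.ofReal_mul (by positivity)]
        apply ENNReal.ofReal_le_ofReal
        have habs : |Real.sqrt (w.1 / x.1) * sgH (t / (x.1 * w.1)) * E * (g' w / w.1)|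
            = Real.sqrt (w.1 / x.1) * |sgH (t / (x.1 * w.1))| * E * (|g' w| / w.1) := by
          rw [abs_mul, abs_mul, abs_mul, abs_of_nonneg (Real.sqrt_nonneg _),
            abs_of_pos hE0, abs_div, abs_of_pos hw1]
        rw [habs]
        have hH := sgH_abs_le hs
        have key : Real.sqrt (w.1 / x.1) * (Real.sqrt π / Real.sqrt (t/(x.1*w.1))) / w.1
            = Real.sqrt π / Real.sqrt t := sg_sqrt_identity ht hx hw1
        calc Real.sqrt (w.1 / x.1) * |sgH (t / (x.1 * w.1))| * E * (|g' w| / w.1)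
            ≤ Real.sqrt (w.1 / x.1) * (Real.sqrt π / Real.sqrt (t/(x.1*w.1))) * E *
              (|g' w| / w.1) := by gcongr
          _ = (Real.sqrt (w.1 / x.1) * (Real.sqrt π / Real.sqrt (t/(x.1*w.1))) / w.1) *
              (E * |g' w|) := by ring
          _ = Real.sqrt π / Real.sqrt t * (E * |g' w|) := by rw [key]
    _ = ENNReal.ofReal (Real.sqrt π / (4*π*t*Real.sqrt t)) *
        ∫⁻ w, ENNReal.ofReal (Real.exp (-(((x.1 - w.1)^2 + (x.2 - w.2)^2) / (4*t)))) *
          (‖g' w‖₊ : ℝ≥0∞) ∂sgMu := by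
        rw [lintegral_const_mul' _ _ ENNReal.ofReal_ne_top, ← mul_assoc,
          ← ENNReal.ofReal_mul (by positivity)]
        congr 2
        field_simp

lemma sg_finalBound {t e : ℝ} (ht : 0 < t) (he2 : e ≤ 2) :
    ENNReal.ofReal (Real.sqrt π / (4*π*t*Real.sqrt t)) * ENNReal.ofReal (4*π*t) ^ e
      ≤ ENNReal.ofReal (1000 * t ^ (e - 3/2 : ℝ)) := by
  have h4πt : (0:ℝ) < 4*π*t := by positivity
  rw [ENNReal.ofReal_rpow_of_pos h4πt, ← ENNReal.ofReal_mul (by positivity)]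
  apply ENNReal.ofReal_le_ofReal
  have h1 : (4*π*t) ^ e = (4*π)^e * t^e := by
    rw [show 4*π*t = (4*π)*t by ring, Real.mul_rpow (by positivity) ht.le]
  have h2 : t * Real.sqrt t = t ^ (3/2 : ℝ) := by
    rw [Real.sqrt_eq_rpow, show (3/2:ℝ) = 1 + 1/2 by norm_num, Real.rpow_add ht, Real.rpow_one]
  have h3 : (4*π)^e ≤ (4*π)^(2:ℝ) :=
    Real.rpow_le_rpow_of_exponent_le (by nlinarith [pi_gt_three]) he2
  have h4 : (4*π)^(2:ℝ) = 16*π^2 := by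
    rw [show (2:ℝ) = ((2:ℕ):ℝ) by norm_num, Real.rpow_natCast]; ring
  have h5 : Real.sqrt π ≤ 2 := by
    rw [show (2:ℝ) = Real.sqrt 4 by
      rw [show (4:ℝ) = 2^2 by norm_num, Real.sqrt_sq (by norm_num : (0:ℝ) ≤ 2)]]
    exact Real.sqrt_le_sqrt (by nlinarith [pi_le_four])
  have h7 : t ^ (e - 3/2 : ℝ) = t^e / t^(3/2:ℝ) := Real.rpow_sub ht e (3/2)
  have h8 : Real.sqrt π / (4*π*t*Real.sqrt t) * ((4*π)^e * t^e)
      = (Real.sqrt π/(4*π) * (4*π)^e) * (t^e / t^(3/2:ℝ)) := by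
    rw [← h2]
    field_simp
  rw [h1, h8, ← h7]
  apply mul_le_mul_of_nonneg_right _ (Real.rpow_nonneg ht.le _)
  have h9 : (0:ℝ) ≤ (4*π)^e := Real.rpow_nonneg (by positivity) _
  have h10 : Real.sqrt π/(4*π) ≤ 1 := by
    rw [div_le_one (by positivity)]
    nlinarith [pi_gt_three]
  calc Real.sqrt π/(4*π) * (4*π)^e ≤ 1 * (4*π)^e := mul_le_mul_of_nonneg_right h10 h9
    _ = (4*π)^e := one_mul _
    _ ≤ (4*π)^(2:ℝ) := h3
    _ = 16*π^2 := h4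
    _ ≤ 1000 := by nlinarith [pi_le_four, pi_gt_three]

/-- `‖S(t)(g/r)‖_{L^q(Ω)} ≤ C t^{-(1/2 + 1/p - 1/q)} ‖g‖_{L^p(Ω)}` for all
`1 ≤ p ≤ q ≤ ∞` and `t > 0`. -/
theorem stmt11 :
    ∃ C : ℝ, 0 < C ∧ ∀ (p q : ℝ≥0∞), 1 ≤ p → p ≤ q → ∀ t : ℝ, 0 < t →
      ∀ g : ℝ × ℝ → ℝ, MemLp g p sgMu →
      eLpNorm (sgS t (fun w : ℝ × ℝ => g w / w.1)) q sgMu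
        ≤ ENNReal.ofReal (C * t ^ (-(1/2 + 1/p.toReal - 1/q.toReal))) * eLpNorm g p sgMu := by
  classical
  haveI : SFinite sgMu := by unfold sgMu; infer_instance
  refine ⟨1000, by norm_num, ?_⟩
  intro p q hp hpq t ht g hg
  obtain ⟨g', hg'meas, hgg'⟩ := hg.1
  have hSeq : sgS t (fun w : ℝ × ℝ => g w / w.1) = sgS t (fun w => g' w / w.1) := by
    funext x
    rw [sgS, sgS]
    congr 1
    refine integral_congr_ae ?_
    have hae : g =ᵐ[(volume : Measure (ℝ × ℝ)).restrict sgOmega] g' := hgg'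
    filter_upwards [hae] with w hw
    rw [hw]
  have hNg : eLpNorm g p sgMu = eLpNorm g' p sgMu := eLpNorm_congr_ae hgg'
  rw [hSeq, hNg]
  have hgtop : eLpNorm g' p sgMu < ⊤ := hNg ▸ hg.2
  set F : ℝ × ℝ → ℝ≥0∞ := fun w => (‖g' w‖₊ : ℝ≥0∞) with hFdef
  set K : ℝ × ℝ → ℝ × ℝ → ℝ≥0∞ := fun x w =>
    ENNReal.ofReal (Real.exp (-(((x.1 - w.1)^2 + (x.2 - w.2)^2) / (4*t)))) with hKdef
  have hFmeas : Measurable F := hg'meas.measurable.nnnorm.coe_nnreal_ennreal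
  have hKmeas : Measurable (fun z : (ℝ × ℝ) × (ℝ × ℝ) => K z.1 z.2) := by
    apply ENNReal.measurable_ofReal.comp
    fun_prop
  have hKmeas1 : ∀ x, Measurable (K x) := fun x => by
    apply ENNReal.measurable_ofReal.comp; fun_prop
  have hKmeas2 : ∀ w, Measurable (fun x => K x w) := fun w => by
    apply ENNReal.measurable_ofReal.comp; fun_prop
  have hK1 : ∀ x w, K x w ≤ 1 := by
    intro x w
    rw [hKdef, show (1:ℝ≥0∞) = ENNReal.ofReal 1 from ENNReal.ofReal_one.symm]
    exact ENNReal.ofReal_le_ofReal (Real.exp_le_one_iff.2 (neg_nonpos.2 (by positivity)))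
  have hK0 : ∀ x w, K x w ≠ 0 := fun x w => (ENNReal.ofReal_pos.2 (Real.exp_pos _)).ne'
  have hKtop : ∀ x w, K x w ≠ ⊤ := fun x w => ENNReal.ofReal_ne_top
  have hKint1 : ∀ x : ℝ × ℝ, ∫⁻ w, K x w ∂sgMu ≤ ENNReal.ofReal (4*π*t) :=
    fun x => sg_gauss2 ht x
  have hKint2 : ∀ w : ℝ × ℝ, ∫⁻ x, K x w ∂sgMu ≤ ENNReal.ofReal (4*π*t) := by
    intro w
    refine le_trans (le_of_eq (lintegral_congr fun x => ?_)) (sg_gauss2 ht w)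
    rw [hKdef]
    ring_nf
  have hpt : ∀ x ∈ sgOmega, (‖sgS t (fun w => g' w / w.1) x‖₊ : ℝ≥0∞) ≤
      ENNReal.ofReal (Real.sqrt π / (4*π*t*Real.sqrt t)) * ∫⁻ w, K x w * F w ∂sgMu :=
    fun x hx => sgS_pointwise ht g' hx
  set c₂ : ℝ≥0∞ := ENNReal.ofReal (Real.sqrt π / (4*π*t*Real.sqrt t)) with hc₂
  have hMem : ∀ᵐ x ∂sgMu, x ∈ sgOmega := by
    unfold sgMu
    exact ae_restrict_mem sgOmega_meas
  set Mt : ℝ≥0∞ := ENNReal.ofReal (4*π*t) with hMt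
  have hMt0 : Mt ≠ 0 := by
    rw [hMt]
    simp only [ne_eq, ENNReal.ofReal_eq_zero, not_le]
    positivity
  have hMttop : Mt ≠ ⊤ := ENNReal.ofReal_ne_top
  by_cases hqtop : q = ∞
  · -- case q = ∞
    subst hqtop
    rw [eLpNorm_exponent_top]
    have hassemble : ∀ (R : ℝ≥0∞) (e : ℝ), e ≤ 2 →
        (∀ x, (∫⁻ w, K x w * F w ∂sgMu) ≤ Mt ^ e * R) →
        eLpNormEssSup (sgS t (fun w => g' w / w.1)) sgMu ≤
          ENNReal.ofReal (1000 * t ^ (e - 3/2 : ℝ)) * R := by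
      intro R e he hR
      have h1 : eLpNormEssSup (sgS t (fun w => g' w / w.1)) sgMu ≤ c₂ * (Mt ^ e * R) := by
        refine essSup_le_of_ae_le _ ?_
        filter_upwards [hMem] with x hx
        exact (hpt x hx).trans (mul_le_mul_right (hR x) _)
      refine h1.trans ?_
      rw [← mul_assoc]
      exact mul_le_mul_left (sg_finalBound ht he) _
    by_cases hptop : p = ∞
    · -- p = ∞
      subst hptop
      have hR : ∀ x, (∫⁻ w, K x w * F w ∂sgMu) ≤ Mt ^ (1:ℝ) * eLpNorm g' ∞ sgMu := by
        intro x
        rw [ENNReal.rpow_one]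
        have h1 : (∫⁻ w, K x w * F w ∂sgMu) ≤ ∫⁻ w, K x w * eLpNormEssSup g' sgMu ∂sgMu := by
          apply lintegral_mono_ae
          filter_upwards [ae_le_essSup (fun w => F w)] with w hw
          exact mul_le_mul_right hw _
        refine h1.trans ?_
        rw [lintegral_mul_const _ (hKmeas1 x), eLpNorm_exponent_top]
        exact mul_le_mul_left (hKint1 x) _
      have := hassemble (eLpNorm g' ∞ sgMu) 1 (by norm_num) hR
      refine this.trans (le_of_eq ?_)
      congr 2
      norm_num
    · by_cases hpone : p = 1
      · -- p = 1
        subst hpone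
        have hR : ∀ x, (∫⁻ w, K x w * F w ∂sgMu) ≤ Mt ^ (0:ℝ) * eLpNorm g' 1 sgMu := by
          intro x
          rw [ENNReal.rpow_zero, one_mul, eLpNorm_one_eq_lintegral_enorm]
          refine lintegral_mono fun w => ?_
          calc K x w * F w ≤ 1 * F w := mul_le_mul_left (hK1 x w) _
            _ = F w := one_mul _
        have := hassemble (eLpNorm g' 1 sgMu) 0 (by norm_num) hR
        refine this.trans (le_of_eq ?_)
        congr 2
        norm_num
      · -- 1 < p < ∞
        have hp0 : p ≠ 0 := (lt_of_lt_of_le zero_lt_one hp).ne'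
        have hp1 : 1 < p := lt_of_le_of_ne hp (Ne.symm hpone)
        have hpr1 : 1 < p.toReal := by
          rw [show (1:ℝ) = (1:ℝ≥0∞).toReal by simp]
          exact (ENNReal.toReal_lt_toReal (by simp) hptop).2 hp1
        set pr := p.toReal with hprdef
        have hconj : (Real.conjExponent pr).HolderConjugate pr :=
          (Real.HolderConjugate.conjExponent hpr1).symm
        set a := Real.conjExponent pr with hadef
        have ha1 : 1 < a := hconj.lt
        have hR : ∀ x, (∫⁻ w, K x w * F w ∂sgMu) ≤ Mt ^ (1/a) * eLpNorm g' p sgMu := by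
          intro x
          have h1 := ENNReal.lintegral_mul_le_Lp_mul_Lq sgMu hconj (hKmeas1 x).aemeasurable
            hFmeas.aemeasurable
          refine h1.trans ?_
          have h2 : (∫⁻ w, K x w ^ a ∂sgMu) ≤ Mt := by
            refine le_trans (lintegral_mono fun w => ?_) (hKint1 x)
            calc K x w ^ a ≤ K x w ^ (1:ℝ) :=
                ENNReal.rpow_le_rpow_of_exponent_ge (hK1 x w) (by linarith)
              _ = K x w := ENNReal.rpow_one _
          have h3 : (∫⁻ w, F w ^ pr ∂sgMu) ^ (1/pr) = eLpNorm g' p sgMu :=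
            (eLpNorm_eq_lintegral_rpow_enorm_toReal (f := g') (μ := sgMu) hp0 hptop).symm
          rw [h3]
          exact mul_le_mul_left (ENNReal.rpow_le_rpow h2 (by positivity)) _
        have h1a2 : 1/a ≤ 2 := by
          have h1a : 1/a ≤ 1 := by
            rw [div_le_one (by linarith)]
            linarith
          linarith
        have := hassemble (eLpNorm g' p sgMu) (1/a) h1a2 hR
        refine this.trans (le_of_eq ?_)
        congr 3
        have hia : 1/a = 1 - 1/pr := by
          have := hconj.inv_add_inv_eq_one
          rw [one_div, one_div]
          linarith
        rw [hia]
        simp only [ENNReal.toReal_top]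
        norm_num
        ring
  · -- case q < ∞
    have hptop : p ≠ ∞ := fun h => hqtop (top_le_iff.mp (h ▸ hpq))
    have hp0 : p ≠ 0 := (lt_of_lt_of_le zero_lt_one hp).ne'
    have hq0 : q ≠ 0 := (lt_of_lt_of_le zero_lt_one (hp.trans hpq)).ne'
    set pr := p.toReal with hprdef
    set qr := q.toReal with hqrdef
    have hpr1 : 1 ≤ pr := by
      rw [show (1:ℝ) = (1:ℝ≥0∞).toReal by simp]
      exact ENNReal.toReal_mono hptop hp
    have hprqr : pr ≤ qr := ENNReal.toReal_mono hqtop hpq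
    have hpr0 : 0 < pr := lt_of_lt_of_le zero_lt_one hpr1
    have hqr0 : 0 < qr := lt_of_lt_of_le hpr0 hprqr
    set θ₀ : ℝ := 1/qr with hθ₀def
    set θ₁ : ℝ := 1 - 1/pr with hθ₁def
    set θ₂ : ℝ := 1/pr - 1/qr with hθ₂def
    have hθ₀ : 0 < θ₀ := by rw [hθ₀def]; positivity
    have hθ₁ : 0 ≤ θ₁ := by
      rw [hθ₁def]
      have : 1/pr ≤ 1 := by rw [div_le_one hpr0]; exact hpr1
      linarith
    have hθ₂ : 0 ≤ θ₂ := by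
      rw [hθ₂def]
      have : 1/qr ≤ 1/pr := one_div_le_one_div_of_le hpr0 hprqr
      linarith
    have hd : 0 < θ₀ + θ₁ := by linarith
    have hd1 : θ₀ + θ₁ ≤ 1 := by
      have : 1/qr ≤ 1/pr := one_div_le_one_div_of_le hpr0 hprqr
      rw [hθ₀def, hθ₁def]
      linarith
    set s : ℝ := 1/(θ₀ + θ₁) with hsdef
    have hs1 : 1 ≤ s := one_le_one_div hd hd1
    have hsθ01 : s*θ₀ + s*θ₁ = 1 := by
      rw [hsdef]
      field_simp
    have hsθ02 : pr*θ₀ + pr*θ₂ = 1 := by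
      rw [hθ₀def, hθ₂def]
      field_simp
      ring
    set Np : ℝ≥0∞ := ∫⁻ w, F w ^ pr ∂sgMu with hNpdef
    have hNp : Np ^ (1/pr) = eLpNorm g' p sgMu :=
      (eLpNorm_eq_lintegral_rpow_enorm_toReal (f := g') (μ := sgMu) hp0 hptop).symm
    have hNptop : Np ≠ ⊤ := by
      intro h
      rw [← hNp, h] at hgtop
      rw [ENNReal.top_rpow_of_pos (by positivity)] at hgtop
      exact (lt_irrefl _ hgtop)
    -- Hoelder
    have hfac : ∀ x w, K x w * F w =
        (K x w ^ s * F w ^ pr) ^ θ₀ * (K x w ^ s) ^ θ₁ * (F w ^ pr) ^ θ₂ := by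
      intro x w
      rw [ENNReal.mul_rpow_of_nonneg _ _ hθ₀.le,
        ← ENNReal.rpow_mul (K x w), ← ENNReal.rpow_mul (K x w),
        ← ENNReal.rpow_mul (F w), ← ENNReal.rpow_mul (F w)]
      rw [show K x w ^ (s*θ₀) * F w ^ (pr*θ₀) * K x w ^ (s*θ₁) * (F w) ^ (pr*θ₂)
          = (K x w ^ (s*θ₀) * K x w ^ (s*θ₁)) * (F w ^ (pr*θ₀) * F w ^ (pr*θ₂)) by ring]
      rw [← ENNReal.rpow_add _ _ (hK0 x w) (hKtop x w),
        ← ENNReal.rpow_add_of_nonneg _ _ (mul_nonneg hpr0.le hθ₀.le)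
          (mul_nonneg hpr0.le hθ₂),
        hsθ01, hsθ02, ENNReal.rpow_one, ENNReal.rpow_one]
    have hKsle : ∀ x w, K x w ^ s ≤ K x w := by
      intro x w
      calc K x w ^ s ≤ K x w ^ (1:ℝ) :=
          ENNReal.rpow_le_rpow_of_exponent_ge (hK1 x w) hs1
        _ = K x w := ENNReal.rpow_one _
    have hHold : ∀ x, (∫⁻ w, K x w * F w ∂sgMu) ≤
        (∫⁻ w, K x w ^ s * F w ^ pr ∂sgMu) ^ θ₀ * Mt ^ θ₁ * Np ^ θ₂ := by
      intro x
      have happ := ENNReal.lintegral_prod_norm_pow_le (μ := sgMu) Finset.univ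
        (f := ![fun w => K x w ^ s * F w ^ pr, fun w => K x w ^ s, fun w => F w ^ pr])
        (fun i _ => by
          fin_cases i
          · exact (((hKmeas1 x).pow_const s).mul (hFmeas.pow_const pr)).aemeasurable
          · exact ((hKmeas1 x).pow_const s).aemeasurable
          · exact (hFmeas.pow_const pr).aemeasurable)
        (p := ![θ₀, θ₁, θ₂])
        (by
          rw [Fin.sum_univ_three]
          simp only [Matrix.cons_val_zero, Matrix.cons_val_one, Matrix.head_cons,
            Matrix.cons_val_two, Matrix.tail_cons]
          rw [hθ₀def, hθ₁def, hθ₂def]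
          ring)
        (fun i _ => by
          fin_cases i <;>
            simp only [Matrix.cons_val_zero, Matrix.cons_val_one, Matrix.head_cons,
              Matrix.cons_val_two, Matrix.tail_cons]
          · exact hθ₀.le
          · exact hθ₁
          · exact hθ₂)
      have hL : (∫⁻ w, K x w * F w ∂sgMu) = ∫⁻ w, ∏ i : Fin 3,
          (![fun w => K x w ^ s * F w ^ pr, fun w => K x w ^ s, fun w => F w ^ pr]) i w ^
            (![θ₀, θ₁, θ₂]) i ∂sgMu := by
        refine lintegral_congr fun w => ?_
        rw [Fin.prod_univ_three]
        simp only [Matrix.cons_val_zero, Matrix.cons_val_one, Matrix.head_cons,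
          Matrix.cons_val_two, Matrix.tail_cons]
        exact hfac x w
      rw [hL]
      refine happ.trans ?_
      rw [Fin.prod_univ_three]
      simp only [Matrix.cons_val_zero, Matrix.cons_val_one, Matrix.head_cons,
        Matrix.cons_val_two, Matrix.tail_cons]
      refine mul_le_mul' (mul_le_mul' le_rfl ?_) le_rfl
      exact ENNReal.rpow_le_rpow (le_trans (lintegral_mono fun w => hKsle x w) (hKint1 x)) hθ₁
    -- swap
    have hup : AEMeasurable (fun z : (ℝ × ℝ) × (ℝ × ℝ) => K z.1 z.2 ^ s * F z.2 ^ pr)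
        (sgMu.prod sgMu) :=
      ((hKmeas.pow_const s).mul ((hFmeas.comp measurable_snd).pow_const pr)).aemeasurable
    have hswap : (∫⁻ x, ∫⁻ w, K x w ^ s * F w ^ pr ∂sgMu ∂sgMu) ≤ Mt * Np := by
      rw [lintegral_lintegral_swap hup]
      calc (∫⁻ w, ∫⁻ x, K x w ^ s * F w ^ pr ∂sgMu ∂sgMu)
          = ∫⁻ w, (∫⁻ x, K x w ^ s ∂sgMu) * F w ^ pr ∂sgMu := by
            refine lintegral_congr fun w => ?_
            rw [lintegral_mul_const _ ((hKmeas2 w).pow_const s)]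
        _ ≤ ∫⁻ w, Mt * F w ^ pr ∂sgMu := by
            refine lintegral_mono fun w => ?_
            refine mul_le_mul_left ?_ _
            exact le_trans (lintegral_mono fun x => hKsle x w) (hKint2 w)
        _ = Mt * Np := lintegral_const_mul' _ _ hMttop
    -- main estimate
    have hθ₀qr : θ₀ * qr = 1 := by
      rw [hθ₀def]
      field_simp
    have hCfin : c₂ ^ qr * (Mt ^ (θ₁*qr) * Np ^ (θ₂*qr)) ≠ ⊤ := by
      apply ENNReal.mul_ne_top
      · exact ENNReal.rpow_ne_top_of_nonneg hqr0.le ENNReal.ofReal_ne_top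
      · exact ENNReal.mul_ne_top
          (ENNReal.rpow_ne_top_of_nonneg (mul_nonneg hθ₁ hqr0.le) hMttop)
          (ENNReal.rpow_ne_top_of_nonneg (mul_nonneg hθ₂ hqr0.le) hNptop)
    have main : (∫⁻ x, (‖sgS t (fun w => g' w / w.1) x‖₊ : ℝ≥0∞) ^ qr ∂sgMu) ≤
        (c₂ ^ qr * (Mt ^ (θ₁*qr) * Np ^ (θ₂*qr))) * (Mt * Np) := by
      have step1 : ∀ᵐ x ∂sgMu, (‖sgS t (fun w => g' w / w.1) x‖₊ : ℝ≥0∞) ^ qr ≤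
          (c₂ ^ qr * (Mt ^ (θ₁*qr) * Np ^ (θ₂*qr))) *
            (∫⁻ w, K x w ^ s * F w ^ pr ∂sgMu) := by
        filter_upwards [hMem] with x hx
        calc (‖sgS t (fun w => g' w / w.1) x‖₊ : ℝ≥0∞) ^ qr
            ≤ (c₂ * ((∫⁻ w, K x w ^ s * F w ^ pr ∂sgMu) ^ θ₀ * Mt ^ θ₁ * Np ^ θ₂)) ^ qr :=
              ENNReal.rpow_le_rpow ((hpt x hx).trans (mul_le_mul_right (hHold x) _)) hqr0.le
          _ = c₂ ^ qr * ((∫⁻ w, K x w ^ s * F w ^ pr ∂sgMu) ^ (θ₀*qr) * Mt ^ (θ₁*qr) *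
              Np ^ (θ₂*qr)) := by
              rw [ENNReal.mul_rpow_of_nonneg _ _ hqr0.le,
                ENNReal.mul_rpow_of_nonneg _ _ hqr0.le,
                ENNReal.mul_rpow_of_nonneg _ _ hqr0.le,
                ← ENNReal.rpow_mul, ← ENNReal.rpow_mul, ← ENNReal.rpow_mul]
          _ = (c₂ ^ qr * (Mt ^ (θ₁*qr) * Np ^ (θ₂*qr))) *
              (∫⁻ w, K x w ^ s * F w ^ pr ∂sgMu) := by
              rw [hθ₀qr, ENNReal.rpow_one]
              ring
      calc (∫⁻ x, (‖sgS t (fun w => g' w / w.1) x‖₊ : ℝ≥0∞) ^ qr ∂sgMu)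
          ≤ ∫⁻ x, (c₂ ^ qr * (Mt ^ (θ₁*qr) * Np ^ (θ₂*qr))) *
            (∫⁻ w, K x w ^ s * F w ^ pr ∂sgMu) ∂sgMu := lintegral_mono_ae step1
        _ = (c₂ ^ qr * (Mt ^ (θ₁*qr) * Np ^ (θ₂*qr))) *
            ∫⁻ x, ∫⁻ w, K x w ^ s * F w ^ pr ∂sgMu ∂sgMu :=
            lintegral_const_mul' _ _ hCfin
        _ ≤ (c₂ ^ qr * (Mt ^ (θ₁*qr) * Np ^ (θ₂*qr))) * (Mt * Np) :=
            mul_le_mul_right hswap _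
    -- repackage
    set e : ℝ := θ₁ + θ₀ with hedef
    have hpack : (c₂ * Mt ^ e * Np ^ (1/pr)) ^ qr
        = (c₂ ^ qr * (Mt ^ (θ₁*qr) * Np ^ (θ₂*qr))) * (Mt * Np) := by
      rw [ENNReal.mul_rpow_of_nonneg _ _ hqr0.le, ENNReal.mul_rpow_of_nonneg _ _ hqr0.le,
        ← ENNReal.rpow_mul, ← ENNReal.rpow_mul]
      have he1 : e * qr = θ₁*qr + 1 := by
        rw [hedef]
        rw [add_mul, hθ₀qr]
      have he2 : (1/pr) * qr = θ₂*qr + 1 := by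
        rw [hθ₂def, sub_mul]
        have : 1/qr * qr = 1 := by field_simp
        linarith
      rw [he1, he2, ENNReal.rpow_add _ _ hMt0 hMttop,
        ENNReal.rpow_add_of_nonneg _ _ (mul_nonneg hθ₂ hqr0.le) zero_le_one,
        ENNReal.rpow_one, ENNReal.rpow_one]
      ring
    have main2 : (∫⁻ x, (‖sgS t (fun w => g' w / w.1) x‖₊ : ℝ≥0∞) ^ qr ∂sgMu) ≤
        (c₂ * Mt ^ e * Np ^ (1/pr)) ^ qr := by
      rw [hpack]; exact main
    rw [eLpNorm_eq_lintegral_rpow_enorm_toReal hq0 hqtop]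
    have conc := ENNReal.rpow_le_rpow main2 (by positivity : (0:ℝ) ≤ 1/qr)
    rw [← ENNReal.rpow_mul, mul_one_div_cancel hqr0.ne', ENNReal.rpow_one] at conc
    refine conc.trans ?_
    rw [hNp]
    refine mul_le_mul_left ?_ _
    have he2' : e ≤ 2 := by
      have h1 : 1/qr ≤ 1 := by
        rw [div_le_one hqr0]
        linarith
      rw [hedef, hθ₁def, hθ₀def]
      have : 0 ≤ 1/pr := by positivity
      linarith
    have hfb := sg_finalBound ht he2'
    rw [hc₂, hMt]
    refine hfb.trans (le_of_eq ?_)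
    congr 2
    rw [hedef, hθ₁def, hθ₀def]
    ring
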